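/- For the Margulis constant μ = 0.29, one has √(μ/ν(μ/2)) < 5 and √(ε/ν(ε)) < 5 for all ε ≥ μ/2 = 0.145, where ν(r) = 3π∫₀^r (∂_sψ₁(s))² sinh²(s) + 2ψ₁(s)² ds with ψ₁(s) = coth(s) − s·csch²(s). -/

import Mathlib

open Real MeasureTheory

lemma nonneg_aux {f f' : ℝ → ℝ} (hd : ∀ x, HasDerivAt f (f' x) x)
    (h0 : f 0 = 0) (h' : ∀ x, 0 ≤ x → 0 ≤ f' x) {x : ℝ} (hx : 0 ≤ x) : 0 ≤ f x := by
  have hmono : MonotoneOn f (Set.Ici 0) := by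
    apply monotoneOn_of_deriv_nonneg (convex_Ici 0)
    · exact (continuous_iff_continuousAt.2 fun y => (hd y).continuousAt).continuousOn
    · intro y _; exact (hd y).differentiableAt.differentiableWithinAt
    · intro y hy
      rw [interior_Ici, Set.mem_Ioi] at hy
      rw [(hd y).deriv]; exact h' y hy.le
  calc (0:ℝ) = f 0 := h0.symm
  _ ≤ f x := hmono Set.self_mem_Ici hx hx

lemma L2 {x : ℝ} (hx : 0 ≤ x) : sinh x ≤ x * cosh x := by
  have h := nonneg_aux (f := fun x => x * cosh x - sinh x) (f' := fun x => x * sinh x)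
    (fun y => by
      have h1 : HasDerivAt (fun x : ℝ => x * cosh x - sinh x)
          (1 * cosh y + y * sinh y - cosh y) y :=
        ((hasDerivAt_id y).mul (Real.hasDerivAt_cosh y)).sub (Real.hasDerivAt_sinh y)
      convert h1 using 1; ring)
    (by simp)
    (fun y hy => mul_nonneg hy (by simpa using hy)) hx
  linarith

lemma L3 {x : ℝ} (hx : 0 ≤ x) : (1 - x^2/2) * cosh x ≤ 1 := by
  have h := nonneg_aux (f := fun x => 1 - (1 - x^2/2) * cosh x)
    (f' := fun x => (x * cosh x - sinh x) + x^2/2 * sinh x)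
    (fun y => by
      have h1 : HasDerivAt (fun x : ℝ => 1 - (1 - x^2/2) * cosh x)
          (0 - ((0 - 2*y^(2-1)/2) * cosh y + (1 - y^2/2) * sinh y)) y := by
        exact (hasDerivAt_const y (1:ℝ)).sub
          ((((hasDerivAt_const y (1:ℝ)).sub ((hasDerivAt_pow 2 y).div_const 2)).mul
            (Real.hasDerivAt_cosh y)))
      convert h1 using 1; ring)
    (by simp)
    (fun y hy => by
      have := L2 hy
      have hs : 0 ≤ sinh y := by simpa using hy
      nlinarith) hx
  linarith

lemma L4 {x : ℝ} (hx : 0 ≤ x) : x^3/3 ≤ x * cosh x - sinh x := by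
  have h := nonneg_aux (f := fun x => x * cosh x - sinh x - x^3/3)
    (f' := fun x => x * (sinh x - x))
    (fun y => by
      have h1 : HasDerivAt (fun x : ℝ => x * cosh x - sinh x - x^3/3)
          (1 * cosh y + y * sinh y - cosh y - 3*y^(3-1)/3) y :=
        (((hasDerivAt_id y).mul (Real.hasDerivAt_cosh y)).sub (Real.hasDerivAt_sinh y)).sub
          ((hasDerivAt_pow 3 y).div_const 3)
      convert h1 using 1; ring)
    (by simp)
    (fun y hy => mul_nonneg hy (by simpa using hy)) hx
  linarith

lemma L5 {x : ℝ} (hx : 0 ≤ x) : 2/3*x^3 ≤ sinh x * cosh x - x := by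
  have h := nonneg_aux (f := fun x => sinh x * cosh x - x - 2/3*x^3)
    (f' := fun x => 2 * (sinh x ^ 2 - x^2))
    (fun y => by
      have h1 : HasDerivAt (fun x : ℝ => sinh x * cosh x - x - 2/3*x^3)
          (cosh y * cosh y + sinh y * sinh y - 1 - 2/3*(3*y^(3-1))) y :=
        (((Real.hasDerivAt_sinh y).mul (Real.hasDerivAt_cosh y)).sub (hasDerivAt_id y)).sub
          ((hasDerivAt_pow 3 y).const_mul (2/3))
      convert h1 using 1
      have := Real.cosh_sq y
      nlinarith [Real.cosh_sq y])
    (by simp)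
    (fun y hy => by
      have h1 : y ≤ sinh y := by simpa using hy
      have hs : 0 ≤ sinh y := by simpa using hy
      show (0:ℝ) ≤ 2 * (sinh y ^ 2 - y^2)
      nlinarith) hx
  linarith

lemma L6 {x : ℝ} (hx : 0 ≤ x) : sinh x * cosh x - x ≤ x * sinh x ^ 2 := by
  have h := nonneg_aux (f := fun x => x * sinh x ^ 2 - sinh x * cosh x + x)
    (f' := fun x => sinh x * (2 * x * cosh x - sinh x))
    (fun y => by
      have h1 : HasDerivAt (fun x : ℝ => x * sinh x ^ 2 - sinh x * cosh x + x)
          (1 * sinh y ^ 2 + y * (2 * sinh y ^ (2-1) * cosh y)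
            - (cosh y * cosh y + sinh y * sinh y) + 1) y :=
        (((hasDerivAt_id y).mul ((Real.hasDerivAt_sinh y).pow 2)).sub
          ((Real.hasDerivAt_sinh y).mul (Real.hasDerivAt_cosh y))).add (hasDerivAt_id y)
      convert h1 using 1
      show sinh y * (2 * y * cosh y - sinh y) = _
      have hc := Real.cosh_sq y
      norm_num
      nlinarith [Real.cosh_sq y])
    (by simp)
    (fun y hy => by
      have h1 := L2 hy
      have hs : 0 ≤ sinh y := by simpa using hy
      have hc : 0 ≤ y * cosh y := mul_nonneg hy (Real.cosh_pos y).le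
      show (0:ℝ) ≤ sinh y * (2 * y * cosh y - sinh y)
      nlinarith) hx
  linarith

lemma L7 {x : ℝ} (hx : 0 ≤ x) : x * cosh x - sinh x ≤ x * sinh x ^ 2 := by
  have h := nonneg_aux (f := fun x => x * sinh x ^ 2 - x * cosh x + sinh x)
    (f' := fun x => sinh x * (sinh x + 2 * x * cosh x - x))
    (fun y => by
      have h1 : HasDerivAt (fun x : ℝ => x * sinh x ^ 2 - x * cosh x + sinh x)
          (1 * sinh y ^ 2 + y * (2 * sinh y ^ (2-1) * cosh y)
            - (1 * cosh y + y * sinh y) + cosh y) y :=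
        (((hasDerivAt_id y).mul ((Real.hasDerivAt_sinh y).pow 2)).sub
          ((hasDerivAt_id y).mul (Real.hasDerivAt_cosh y))).add (Real.hasDerivAt_sinh y)
      convert h1 using 1; ring)
    (by simp)
    (fun y hy => by
      have hs : 0 ≤ sinh y := by simpa using hy
      have hc : 1 ≤ cosh y := Real.one_le_cosh y
      show (0:ℝ) ≤ sinh y * (sinh y + 2 * y * cosh y - y)
      apply mul_nonneg hs
      nlinarith) hx
  linarith

lemma L8 {x : ℝ} (hx : 1 ≤ x) : x * sinh 1 ≤ sinh x := by
  have h : sinh x = sinh (1 + (x - 1)) := by ring_nf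
  rw [h, Real.sinh_add]
  have ht : (0:ℝ) ≤ x - 1 := by linarith
  have h1 : 1 ≤ cosh (x-1) := Real.one_le_cosh _
  have h2 : x - 1 ≤ sinh (x-1) := Real.self_le_sinh_iff.mpr ht
  have h3 : sinh 1 ≤ cosh 1 := (Real.sinh_lt_cosh 1).le
  have hs1 : 0 ≤ sinh 1 := by norm_num
  nlinarith


/-- `ψ₁(s) = coth(s) − s·csch²(s)`. -/
noncomputable def psi1 (s : ℝ) : ℝ := cosh s / sinh s - s / (sinh s) ^ 2

/-- `∂_s ψ₁(s) = 2(s·coth(s) − 1)/sinh²(s)`. -/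
noncomputable def dpsi1 (s : ℝ) : ℝ := 2 * (s * (cosh s / sinh s) - 1) / (sinh s) ^ 2

/-- `ν(r) = 3π ∫₀^r (∂_sψ₁)² sinh²(s) + 2ψ₁(s)² ds`. -/
noncomputable def nu (r : ℝ) : ℝ :=
  3 * π * ∫ s in Set.Ioc 0 r, (dpsi1 s) ^ 2 * (sinh s) ^ 2 + 2 * (psi1 s) ^ 2

noncomputable def Fi (s : ℝ) : ℝ := (dpsi1 s) ^ 2 * (sinh s) ^ 2 + 2 * (psi1 s) ^ 2

lemma nu_eq (r : ℝ) : nu r = 3 * π * ∫ s in Set.Ioc 0 r, Fi s := rfl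

lemma psi1_eq {s : ℝ} (hs : 0 < s) : psi1 s = (sinh s * cosh s - s) / sinh s ^ 2 := by
  have h : sinh s ≠ 0 := ne_of_gt (by simpa using hs)
  unfold psi1
  rw [eq_div_iff (pow_ne_zero 2 h)]
  field_simp

lemma dpsi1_eq {s : ℝ} (hs : 0 < s) : dpsi1 s = 2 * (s * cosh s - sinh s) / sinh s ^ 3 := by
  have h : sinh s ≠ 0 := ne_of_gt (by simpa using hs)
  unfold dpsi1
  rw [eq_div_iff (pow_ne_zero 3 h)]
  field_simp

lemma Fi_nonneg (s : ℝ) : 0 ≤ Fi s := by unfold Fi; positivity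

lemma Fi_meas : Measurable Fi := by
  unfold Fi psi1 dpsi1
  have hs : Measurable Real.sinh := Real.continuous_sinh.measurable
  have hc : Measurable Real.cosh := Real.continuous_cosh.measurable
  fun_prop

section Bounds
variable {s : ℝ}

lemma e1 (hs : 0 < s) :
    dpsi1 s ^ 2 * sinh s ^ 2 = 4 * (s * cosh s - sinh s) ^ 2 / sinh s ^ 4 := by
  have h : sinh s ≠ 0 := ne_of_gt (by simpa using hs)
  rw [dpsi1_eq hs]; field_simp; ring

lemma e2 (hs : 0 < s) :
    psi1 s ^ 2 = (sinh s * cosh s - s) ^ 2 / sinh s ^ 4 := by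
  have h : sinh s ≠ 0 := ne_of_gt (by simpa using hs)
  rw [psi1_eq hs, div_pow]
  congr 1
  ring

lemma Fi_le (hs : 0 < s) : Fi s ≤ 6 * s ^ 2 := by
  have hS : 0 < sinh s := by simpa using hs
  have hA0 : 0 ≤ s * cosh s - sinh s := by nlinarith [L4 hs.le, pow_pos hs 3]
  have hA1 : s * cosh s - sinh s ≤ s * sinh s ^ 2 := L7 hs.le
  have hB0 : 0 ≤ sinh s * cosh s - s := by nlinarith [L5 hs.le, pow_pos hs 3]
  have hB1 : sinh s * cosh s - s ≤ s * sinh s ^ 2 := L6 hs.le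
  have h4 : (0:ℝ) < sinh s ^ 4 := by positivity
  have k1 : (s * cosh s - sinh s) ^ 2 ≤ (s * sinh s ^ 2) ^ 2 := pow_le_pow_left₀ hA0 hA1 2
  have k2 : (sinh s * cosh s - s) ^ 2 ≤ (s * sinh s ^ 2) ^ 2 := pow_le_pow_left₀ hB0 hB1 2
  unfold Fi
  rw [e1 hs, e2 hs]
  have hcomb : 4 * (s * cosh s - sinh s) ^ 2 / sinh s ^ 4
      + 2 * ((sinh s * cosh s - s) ^ 2 / sinh s ^ 4)
      = (4 * (s * cosh s - sinh s) ^ 2 + 2 * (sinh s * cosh s - s) ^ 2) / sinh s ^ 4 := by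
    ring
  rw [hcomb, div_le_iff₀ h4]
  nlinarith [k1, k2]

lemma Fi_lower (hs : 0 < s) : 4 / 3 * s ^ 2 / cosh s ^ 4 ≤ Fi s := by
  have hS : 0 < sinh s := by simpa using hs
  have hC : 0 < cosh s := Real.cosh_pos s
  have hA : s ^ 3 / 3 ≤ s * cosh s - sinh s := L4 hs.le
  have hB : 2 / 3 * s ^ 3 ≤ sinh s * cosh s - s := L5 hs.le
  have hSle : sinh s ≤ s * cosh s := L2 hs.le
  have h4 : (0:ℝ) < sinh s ^ 4 := by positivity
  have hdenle : sinh s ^ 4 ≤ s ^ 4 * cosh s ^ 4 := by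
    calc sinh s ^ 4 ≤ (s * cosh s) ^ 4 := pow_le_pow_left₀ hS.le hSle 4
    _ = s ^ 4 * cosh s ^ 4 := by ring
  have hnum : 4 / 3 * s ^ 6 ≤ 4 * (s * cosh s - sinh s) ^ 2 + 2 * (sinh s * cosh s - s) ^ 2 := by
    nlinarith [pow_pos hs 3, sq_nonneg (s^3)]
  unfold Fi
  rw [e1 hs, e2 hs]
  have hcomb : 4 * (s * cosh s - sinh s) ^ 2 / sinh s ^ 4
      + 2 * ((sinh s * cosh s - s) ^ 2 / sinh s ^ 4)
      = (4 * (s * cosh s - sinh s) ^ 2 + 2 * (sinh s * cosh s - s) ^ 2) / sinh s ^ 4 := by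
    ring
  rw [hcomb]
  have heq : 4 / 3 * s ^ 2 / cosh s ^ 4 = 4 / 3 * s ^ 6 / (s ^ 4 * cosh s ^ 4) := by
    field_simp
  rw [heq]
  exact div_le_div₀ (by positivity) hnum h4 hdenle

end Bounds

lemma expneg_lt : exp (-1) < 0.36787945 := by
  rw [Real.exp_neg]
  have h := Real.exp_one_gt_d9
  have hp := Real.exp_pos 1
  have hinv : exp 1 * (exp 1)⁻¹ = 1 := mul_inv_cancel₀ (ne_of_gt hp)
  nlinarith [h, hp, hinv, inv_pos.mpr hp]

lemma cosh1_lt : cosh 1 < 1.5430807 := by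
  rw [Real.cosh_eq]
  have h1 := Real.exp_one_lt_d9
  have h2 := expneg_lt
  norm_num at h1 h2 ⊢
  linarith

lemma sinh1_gt : 1.1752011 < sinh 1 := by
  rw [Real.sinh_eq]
  have h1 := Real.exp_one_gt_d9
  have h2 := expneg_lt
  norm_num at h1 h2 ⊢
  linarith

lemma P_small {s : ℝ} (h1 : 0 < s) (h2 : s ≤ 0.145) : 1.27 * s ^ 2 ≤ Fi s := by
  refine le_trans ?_ (Fi_lower h1)
  have hc1 : 1 ≤ cosh s := Real.one_le_cosh s
  have hl3 := L3 h1.le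
  have hs2 : s ^ 2 ≤ 0.021025 := by nlinarith
  have hcb : cosh s ≤ 1 / 0.9894875 := by
    rw [le_div_iff₀ (by norm_num)]
    nlinarith
  have hc4 : cosh s ^ 4 ≤ (1 / 0.9894875) ^ 4 := pow_le_pow_left₀ (by linarith) hcb 4
  rw [le_div_iff₀ (by positivity)]
  nlinarith [sq_nonneg s, mul_le_mul_of_nonneg_left hc4 (show (0:ℝ) ≤ 1.27 * s ^ 2 by positivity)]

lemma P_mid {s : ℝ} (h1 : 0.145 ≤ s) (h2 : s ≤ 1) : (0.00425:ℝ) ≤ Fi s := by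
  have h0 : (0:ℝ) < s := by linarith
  refine le_trans ?_ (Fi_lower h0)
  have hcb : cosh s ≤ cosh 1 := by
    rw [Real.cosh_le_cosh]
    rw [abs_of_nonneg h0.le, abs_of_nonneg (by norm_num : (0:ℝ) ≤ 1)]
    exact h2
  have hcb' : cosh s ≤ 1.5430807 := le_trans hcb cosh1_lt.le
  have hc4 : cosh s ^ 4 ≤ (1.5430807:ℝ) ^ 4 := pow_le_pow_left₀ (Real.cosh_pos s).le hcb' 4
  rw [le_div_iff₀ (by positivity)]
  nlinarith [hc4, h1, sq_nonneg s]

lemma P_big {s : ℝ} (h1 : 1 ≤ s) : (0.00425:ℝ) ≤ Fi s := by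
  have h0 : (0:ℝ) < s := by linarith
  have hS : 0 < sinh s := by simpa using h0
  have hSl : s * sinh 1 ≤ sinh s := L8 h1
  have hs1 := sinh1_gt
  have hq : cosh s / sinh s - s / sinh s ^ 2 = psi1 s := rfl
  have hA : 1 ≤ cosh s / sinh s := by
    rw [le_div_iff₀ hS]
    nlinarith [Real.sinh_lt_cosh s]
  have hB : s / sinh s ^ 2 ≤ 0.7241 := by
    rw [div_le_iff₀ (by positivity)]
    have k : (s * sinh 1) ^ 2 ≤ sinh s ^ 2 := pow_le_pow_left₀ (by positivity) hSl 2
    have k2 : (1.1752011:ℝ) ^ 2 ≤ sinh 1 ^ 2 := pow_le_pow_left₀ (by norm_num) hs1.le 2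
    have k3 : s * 1 ≤ s * s := mul_le_mul_of_nonneg_left h1 h0.le
    nlinarith [k, sq_nonneg s, mul_le_mul_of_nonneg_left k2 (sq_nonneg s), k3]
  have hpsi : (0.2759:ℝ) ≤ psi1 s := by
    rw [← hq]; linarith
  have hrest : (0:ℝ) ≤ dpsi1 s ^ 2 * sinh s ^ 2 := by positivity
  unfold Fi
  nlinarith [hpsi, hrest]

lemma P_tail {s : ℝ} (h : 0.145 ≤ s) : (0.00425:ℝ) ≤ Fi s := by
  rcases le_total s 1 with h2 | h2
  · exact P_mid h h2
  · exact P_big h2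

lemma Fi_int (r : ℝ) : IntegrableOn Fi (Set.Ioc 0 r) := by
  apply Integrable.mono' (g := fun _ => 6 * r ^ 2)
    (integrableOn_const measure_Ioc_lt_top.ne) Fi_meas.aestronglyMeasurable
  filter_upwards [ae_restrict_mem measurableSet_Ioc] with s hs
  rw [Real.norm_eq_abs, abs_of_nonneg (Fi_nonneg s)]
  refine le_trans (Fi_le hs.1) ?_
  nlinarith [hs.1, hs.2]

lemma int_lb1 : (0.00129:ℝ) ≤ ∫ s in Set.Ioc (0:ℝ) 0.145, Fi s := by
  have hmono : ∫ s in Set.Ioc (0:ℝ) 0.145, 1.27 * s ^ 2 ≤ ∫ s in Set.Ioc (0:ℝ) 0.145, Fi s :=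
    setIntegral_mono_on ((continuous_const.mul (continuous_pow 2)).integrableOn_Ioc)
      (Fi_int 0.145) measurableSet_Ioc (fun s hs => P_small hs.1 hs.2)
  have hval : ∫ s in Set.Ioc (0:ℝ) 0.145, 1.27 * s ^ 2 = 1.27 * ((0.145:ℝ) ^ 3 / 3) := by
    rw [← intervalIntegral.integral_of_le (by norm_num)]
    rw [intervalIntegral.integral_const_mul, integral_pow]
    norm_num
  rw [hval] at hmono
  refine le_trans ?_ hmono
  norm_num

lemma int_lb2 {ε : ℝ} (hε : 0.145 ≤ ε) :
    0.00425 * (ε - 0.145) ≤ ∫ s in Set.Ioc (0.145:ℝ) ε, Fi s := by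
  have hint : IntegrableOn Fi (Set.Ioc 0.145 ε) :=
    (Fi_int ε).mono_set (Set.Ioc_subset_Ioc_left (by norm_num))
  have h := setIntegral_mono_on (μ := volume) (f := fun _ => (0.00425:ℝ)) (g := Fi)
    (integrableOn_const measure_Ioc_lt_top.ne) hint measurableSet_Ioc
    (fun s hs => P_tail hs.1.le)
  rw [setIntegral_const, Real.volume_real_Ioc_of_le hε, smul_eq_mul] at h
  linarith

lemma nu_lb1 : (0.0116:ℝ) < nu 0.145 := by
  rw [nu_eq]
  have hπ : 3.141592 < π := Real.pi_gt_d6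
  nlinarith [int_lb1, hπ]

lemma nu_lb2 {ε : ℝ} (hε : 0.145 ≤ ε) : ε / 25 < nu ε := by
  rw [nu_eq]
  have hsplit : ∫ s in Set.Ioc (0:ℝ) ε, Fi s
      = (∫ s in Set.Ioc (0:ℝ) 0.145, Fi s) + ∫ s in Set.Ioc (0.145:ℝ) ε, Fi s := by
    rw [← setIntegral_union (Set.Ioc_disjoint_Ioc_of_le le_rfl) measurableSet_Ioc (Fi_int 0.145)
      ((Fi_int ε).mono_set (Set.Ioc_subset_Ioc_left (by norm_num))),
      Set.Ioc_union_Ioc_eq_Ioc (by norm_num) hε]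
  rw [hsplit]
  have h1 := int_lb1
  have h2 := int_lb2 hε
  have hπ : 3.141592 < π := Real.pi_gt_d6
  have hJ : 0.00129 + 0.00425 * (ε - 0.145)
      ≤ (∫ s in Set.Ioc (0:ℝ) 0.145, Fi s) + ∫ s in Set.Ioc (0.145:ℝ) ε, Fi s := by linarith
  have hm : (0:ℝ) < 0.00129 + 0.00425 * (ε - 0.145) := by linarith
  have hmul : 3 * 3.141592 * (0.00129 + 0.00425 * (ε - 0.145))
      ≤ 3 * π * ((∫ s in Set.Ioc (0:ℝ) 0.145, Fi s) + ∫ s in Set.Ioc (0.145:ℝ) ε, Fi s) :=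
    mul_le_mul (by linarith) hJ hm.le (by positivity)
  linarith


/-- For the Margulis number `μ = 0.29`: `√(μ/ν(μ/2)) < 5`, and `√(ε/ν(ε)) < 5` for
all `ε ≥ μ/2 = 0.145`. -/
theorem numerical_nu_bounds :
    Real.sqrt (0.29 / nu 0.145) < 5 ∧
    ∀ ε : ℝ, 0.145 ≤ ε → Real.sqrt (ε / nu ε) < 5 := by
  constructor
  · have h := nu_lb1
    rw [Real.sqrt_lt' (by norm_num)]
    rw [div_lt_iff₀ (by linarith)]
    nlinarith
  · intro ε hε
    have h := nu_lb2 hε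
    have hν : 0 < nu ε := lt_trans (by linarith) h
    rw [Real.sqrt_lt' (by norm_num), div_lt_iff₀ hν]
    nlinarith
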